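/- Let W ⊆ ℝ^d be closed convex, let f: W × Z → ℝ be G-Lipschitz and β-smooth in w for every z, and let i ≤ m ∈ ℕ. Let S = (z_1,…,z_m) and S' = (z'_1,…,z'_m) be two random datapoint sequences, and let ℱ_{t−1} := (z_1, z'_1,…, z_{t−1}, z'_{t−1}). Assume that for some μ > 0 and 0 ≤ δ ≤ μ/(2β): (i) Pr(z_t ≠ z'_t | ℱ_{t−1}) ≤ δ for all t ≠ i, and (ii) for every t, the conditional expectation E[ f(w; z_t) | ℱ_{t−1} ] is μ-strongly convex as a function of ℱ_{t−1}-measurable w ∈ W. Set μ̃ := μ − δβ and use step sizes η_t = min{ μ̃/β², 2/(μ̃ t) }. Then for any initialization w_1 ∈ W, the projected-gradient-descent outputs GD(S; w_1, m) and GD(S'; w_1, m) (m projected gradient steps w_{t+1} = Π_W(w_t − η_t ∇f(w_t; z_t)) on the respective sequences, from the same w_1) satisfy E ‖GD(S; w_1, m) − GD(S'; w_1, m)‖ ≤ (4G/(μ̃ m)) (1 + 4δm). -/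

import Mathlib

open scoped Classical
set_option maxHeartbeats 4000000

/-- `F` is `μ`-strongly convex on `W` (via its gradient). -/
def StrongConvexOnSet {d : ℕ} (W : Set (EuclideanSpace ℝ (Fin d))) (μ : ℝ)
    (F : EuclideanSpace ℝ (Fin d) → ℝ) : Prop :=
  ∀ x ∈ W, ∀ y ∈ W,
    F x + (inner ℝ (gradient F x) (y - x) : ℝ) + μ / 2 * ‖y - x‖ ^ 2 ≤ F y

theorem proj_nonexpansive' {d : ℕ} (W : Set (EuclideanSpace ℝ (Fin d))) (hWconv : Convex ℝ W)
    (proj : EuclideanSpace ℝ (Fin d) → EuclideanSpace ℝ (Fin d))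
    (hproj : ∀ x, proj x ∈ W ∧ ∀ w ∈ W, ‖x - proj x‖ ≤ ‖x - w‖)
    (x y : EuclideanSpace ℝ (Fin d)) : ‖proj x - proj y‖ ≤ ‖x - y‖ := by
  have key : ∀ u, ∀ w ∈ W, (inner ℝ (u - proj u) (w - proj u) : ℝ) ≤ 0 := by
    intro u w hw
    by_contra hlt
    push_neg at hlt
    set c : ℝ := inner ℝ (u - proj u) (w - proj u) with hc
    have hK : (0:ℝ) ≤ ‖w - proj u‖ ^ 2 := sq_nonneg _
    set θ : ℝ := min 1 (c / (‖w - proj u‖ ^ 2 + 1)) with hθ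
    have hKpos : (0:ℝ) < ‖w - proj u‖ ^ 2 + 1 := by positivity
    have hθpos : 0 < θ := lt_min one_pos (div_pos hlt hKpos)
    have hθ1 : θ ≤ 1 := min_le_left _ _
    have hmem : proj u + θ • (w - proj u) ∈ W := by
      have := hWconv (hproj u).1 hw (a := 1 - θ) (b := θ) (by linarith) (le_of_lt hθpos) (by ring)
      convert this using 1
      module
    have hle := (hproj u).2 _ hmem
    have hsq : ‖u - proj u‖ ^ 2 ≤ ‖u - (proj u + θ • (w - proj u))‖ ^ 2 := by
      have h0 : (0:ℝ) ≤ ‖u - proj u‖ := norm_nonneg _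
      nlinarith [norm_nonneg (u - (proj u + θ • (w - proj u)))]
    have hexp : ‖u - (proj u + θ • (w - proj u))‖ ^ 2
        = ‖u - proj u‖ ^ 2 - 2 * θ * c + θ^2 * ‖w - proj u‖ ^ 2 := by
      have he : u - (proj u + θ • (w - proj u)) = (u - proj u) - θ • (w - proj u) := by module
      rw [he, norm_sub_sq_real, inner_smul_right, norm_smul, Real.norm_eq_abs,
        abs_of_pos hθpos, ← hc, mul_pow]
      ring
    rw [hexp] at hsq
    have h2 : 2 * θ * c ≤ θ^2 * ‖w - proj u‖ ^ 2 := by linarith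
    have hθle : θ ≤ c / (‖w - proj u‖ ^ 2 + 1) := min_le_right _ _
    have : θ * ‖w - proj u‖ ^ 2 < 2 * c := by
      have h3 : θ * ‖w - proj u‖ ^ 2 ≤ (c / (‖w - proj u‖ ^ 2 + 1)) * ‖w - proj u‖ ^ 2 :=
        mul_le_mul_of_nonneg_right hθle hK
      have h4 : (c / (‖w - proj u‖ ^ 2 + 1)) * ‖w - proj u‖ ^ 2 < 2 * c := by
        rw [div_mul_eq_mul_div, div_lt_iff₀ hKpos]
        nlinarith
      linarith
    nlinarith
  have h1 := key x (proj y) (hproj y).1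
  have h2 := key y (proj x) (hproj x).1
  have e1' : (0:ℝ) ≤ inner ℝ (x - proj x) (proj x - proj y) := by
    rw [show proj y - proj x = -(proj x - proj y) by module, inner_neg_right] at h1
    linarith
  have expand : (inner ℝ (x - y) (proj x - proj y) : ℝ)
      = inner ℝ (x - proj x) (proj x - proj y) - (inner ℝ (y - proj y) (proj x - proj y) : ℝ)
        + ‖proj x - proj y‖ ^ 2 := by
    rw [← real_inner_self_eq_norm_sq,
      show x - y = (x - proj x) - (y - proj y) + (proj x - proj y) by module,
      inner_add_left, inner_sub_left]
  have hsum : ‖proj x - proj y‖ ^ 2 ≤ (inner ℝ (x - y) (proj x - proj y) : ℝ) := by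
    rw [expand]; linarith
  rcases eq_or_lt_of_le (norm_nonneg (proj x - proj y)) with h0 | h0
  · rw [← h0]; exact norm_nonneg _
  · have := real_inner_le_norm (x - y) (proj x - proj y)
    nlinarith

theorem hasGradientAt_wsum {d : ℕ} {Z Ω : Type*} (f : EuclideanSpace ℝ (Fin d) → Z → ℝ)
    (hdiff : ∀ z, Differentiable ℝ (fun w => f w z))
    (A : Finset Ω) (p : Ω → ℝ) (zz : Ω → Z) (c : ℝ) (x : EuclideanSpace ℝ (Fin d)) :
    HasGradientAt (fun w => (∑ ω' ∈ A, p ω' * f w (zz ω')) / c)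
      (c⁻¹ • ∑ ω' ∈ A, p ω' • gradient (fun u => f u (zz ω')) x) x := by
  have h1 : ∀ ω' : Ω, HasGradientAt (fun w => f w (zz ω'))
      (gradient (fun u => f u (zz ω')) x) x :=
    fun ω' => ((hdiff (zz ω')).differentiableAt).hasGradientAt
  rw [hasGradientAt_iff_hasFDerivAt]
  have h2 : ∀ ω', HasFDerivAt (fun w => f w (zz ω'))
      (InnerProductSpace.toDual ℝ _ (gradient (fun u => f u (zz ω')) x)) x :=
    fun ω' => (h1 ω').hasFDerivAt
  have h3 : HasFDerivAt (fun w => ∑ ω' ∈ A, p ω' * f w (zz ω'))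
      (∑ ω' ∈ A, p ω' • (InnerProductSpace.toDual ℝ _ (gradient (fun u => f u (zz ω')) x))) x :=
    HasFDerivAt.fun_sum (fun ω' _ => (h2 ω').const_mul (p ω'))
  have h4 : HasFDerivAt (fun w => (∑ ω' ∈ A, p ω' * f w (zz ω')) / c)
      (c⁻¹ • ∑ ω' ∈ A, p ω' •
        (InnerProductSpace.toDual ℝ _ (gradient (fun u => f u (zz ω')) x))) x := by
    simpa [div_eq_inv_mul] using h3.const_mul c⁻¹
  suffices e : InnerProductSpace.toDual ℝ _ (c⁻¹ • ∑ ω' ∈ A, p ω' • gradient (fun u => f u (zz ω')) x)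
      = c⁻¹ • ∑ ω' ∈ A, p ω' • (InnerProductSpace.toDual ℝ _ (gradient (fun u => f u (zz ω')) x)) by
    rw [e]; exact h4
  rw [map_smul, map_sum]
  congr 1
  exact Finset.sum_congr rfl fun ω' _ => by rw [map_smul]

theorem atom_strong_mono {d : ℕ} {Z Ω : Type*} {W : Set (EuclideanSpace ℝ (Fin d))}
    (f : EuclideanSpace ℝ (Fin d) → Z → ℝ) (hdiff : ∀ z, Differentiable ℝ (fun w => f w z))
    (A : Finset Ω) (p : Ω → ℝ) (zz : Ω → Z) {μ : ℝ}
    (hP : 0 < ∑ ω' ∈ A, p ω')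
    (hsc : StrongConvexOnSet W μ
      (fun w => (∑ ω' ∈ A, p ω' * f w (zz ω')) / (∑ ω' ∈ A, p ω')))
    {x y : EuclideanSpace ℝ (Fin d)} (hx : x ∈ W) (hy : y ∈ W) :
    μ * (∑ ω' ∈ A, p ω') * ‖x - y‖ ^ 2
      ≤ ∑ ω' ∈ A, p ω' * (inner ℝ (gradient (fun u => f u (zz ω')) x
          - gradient (fun u => f u (zz ω')) y) (x - y) : ℝ) := by
  set P : ℝ := ∑ ω' ∈ A, p ω' with hPdef
  set F : EuclideanSpace ℝ (Fin d) → ℝ := fun w => (∑ ω' ∈ A, p ω' * f w (zz ω')) / P with hF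
  have hgrad : ∀ u, gradient F u = P⁻¹ • ∑ ω' ∈ A, p ω' • gradient (fun v => f v (zz ω')) u :=
    fun u => (hasGradientAt_wsum f hdiff A p zz P u).gradient
  have h1 := hsc x hx y hy
  have h2 := hsc y hy x hx
  have hmono : μ * ‖x - y‖ ^ 2 ≤ (inner ℝ (gradient F x - gradient F y) (x - y) : ℝ) := by
    have hsq : ‖x - y‖ ^ 2 = ‖y - x‖ ^ 2 := by rw [norm_sub_rev]
    have e : (inner ℝ (gradient F x - gradient F y) (x - y) : ℝ)
        = -(inner ℝ (gradient F x) (y - x) : ℝ) - (inner ℝ (gradient F y) (x - y) : ℝ) := by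
      rw [inner_sub_left, show y - x = -(x - y) by module, inner_neg_right]
      ring
    rw [← hsq] at h1
    rw [e]
    linarith
  have hexp : (inner ℝ (gradient F x - gradient F y) (x - y) : ℝ)
      = P⁻¹ * ∑ ω' ∈ A, p ω' * (inner ℝ (gradient (fun u => f u (zz ω')) x
          - gradient (fun u => f u (zz ω')) y) (x - y) : ℝ) := by
    rw [hgrad x, hgrad y, ← smul_sub, ← Finset.sum_sub_distrib]
    rw [real_inner_smul_left, sum_inner]
    congr 1
    refine Finset.sum_congr rfl fun ω' _ => ?_
    rw [← smul_sub, real_inner_smul_left]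
  rw [hexp] at hmono
  calc μ * P * ‖x - y‖ ^ 2 = P * (μ * ‖x - y‖ ^ 2) := by ring
    _ ≤ P * (P⁻¹ * ∑ ω' ∈ A, p ω' * (inner ℝ (gradient (fun u => f u (zz ω')) x
          - gradient (fun u => f u (zz ω')) y) (x - y) : ℝ)) :=
        mul_le_mul_of_nonneg_left hmono (le_of_lt hP)
    _ = _ := by field_simp

theorem key_min1 {a τ : ℝ} (ha : 0 ≤ a) (hτ : 1 ≤ τ) :
    (1 - min a (1/τ)) * min (a*(τ-1)) 1 + min a (1/τ) ≤ min (a*τ) 1 := by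
  have hτ0 : 0 < τ := by linarith
  rcases le_or_gt (a*τ) 1 with h | h
  · have hm1 : min a (1/τ) = a := min_eq_left (by rw [le_div_iff₀ hτ0]; linarith)
    have hm2 : min (a*(τ-1)) 1 = a*(τ-1) := min_eq_left (by nlinarith)
    have hm3 : min (a*τ) 1 = a*τ := min_eq_left h
    rw [hm1, hm2, hm3]
    have ha1 : a ≤ 1 := by nlinarith
    nlinarith [mul_nonneg (mul_nonneg ha (by linarith : (0:ℝ) ≤ τ - 1)) ha]
  · have hm1 : min a (1/τ) = 1/τ := min_eq_right (by rw [div_le_iff₀ hτ0]; nlinarith)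
    have hm3 : min (a*τ) 1 = 1 := min_eq_right (le_of_lt h)
    rw [hm1, hm3]
    have h1 : min (a*(τ-1)) 1 ≤ 1 := min_le_right _ _
    have h2 : (0:ℝ) ≤ 1 - 1/τ := by
      have : 1/τ ≤ 1 := by rw [div_le_one hτ0]; linarith
      linarith
    nlinarith

theorem key_min2 {a τ : ℝ} (ha : 0 ≤ a) (hτ : 2 ≤ τ) :
    (1 - min a (1/τ)) * min a (1/(τ-1)) ≤ min a (1/τ) := by
  have hτ0 : 0 < τ := by linarith
  have hτ1 : 0 < τ - 1 := by linarith
  rcases le_or_gt a (1/τ) with h | h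
  · have hm1 : min a (1/τ) = a := min_eq_left h
    rw [hm1]
    have h1 : min a (1/(τ-1)) ≤ a := min_le_left _ _
    have h2 : 0 ≤ 1 - a := by
      have : 1/τ ≤ 1 := by rw [div_le_one hτ0]; linarith
      linarith
    have h3 : 0 ≤ min a (1/(τ-1)) := le_min ha (by positivity)
    nlinarith
  · have hm1 : min a (1/τ) = 1/τ := min_eq_right (le_of_lt h)
    rw [hm1]
    have h1 : min a (1/(τ-1)) ≤ 1/(τ-1) := min_le_right _ _
    have h2 : (0:ℝ) ≤ 1 - 1/τ := by
      have : 1/τ ≤ 1 := by rw [div_le_one hτ0]; linarith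
      linarith
    have h4 : (1 - 1/τ) * (1/(τ-1)) = 1/τ := by field_simp
    calc (1 - 1/τ) * min a (1/(τ-1)) ≤ (1 - 1/τ) * (1/(τ-1)) :=
          mul_le_mul_of_nonneg_left h1 h2
      _ = 1/τ := h4

theorem sqrt_one_sub_le {s : ℝ} (h : s ≤ 2) : Real.sqrt (1 - s) ≤ 1 - s/2 := by
  have h1 : 1 - s ≤ (1 - s/2)^2 := by nlinarith [sq_nonneg s]
  calc Real.sqrt (1-s) ≤ Real.sqrt ((1 - s/2)^2) := Real.sqrt_le_sqrt h1
    _ = 1 - s/2 := Real.sqrt_sq (by linarith)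

theorem sum_weighted_le_sqrt {ι : Type*} (s : Finset ι) (p r : ι → ℝ)
    (hp : ∀ i ∈ s, 0 ≤ p i) (hr : ∀ i ∈ s, 0 ≤ r i) :
    ∑ i ∈ s, p i * r i ≤ Real.sqrt ((∑ i ∈ s, p i) * (∑ i ∈ s, p i * r i ^ 2)) := by
  have cs := Finset.sum_mul_sq_le_sq_mul_sq s (fun i => Real.sqrt (p i))
      (fun i => Real.sqrt (p i) * r i)
  have e1 : ∀ i ∈ s, Real.sqrt (p i) * (Real.sqrt (p i) * r i) = p i * r i := by
    intro i hi
    rw [← mul_assoc, Real.mul_self_sqrt (hp i hi)]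
  have e2 : ∀ i ∈ s, Real.sqrt (p i) ^ 2 = p i := fun i hi => Real.sq_sqrt (hp i hi)
  have e3 : ∀ i ∈ s, (Real.sqrt (p i) * r i) ^ 2 = p i * r i ^ 2 := by
    intro i hi
    rw [mul_pow, Real.sq_sqrt (hp i hi)]
  rw [Finset.sum_congr rfl e1, Finset.sum_congr rfl e2, Finset.sum_congr rfl e3] at cs
  have hnn : 0 ≤ ∑ i ∈ s, p i * r i :=
    Finset.sum_nonneg fun i hi => mul_nonneg (hp i hi) (hr i hi)
  rw [show ∑ i ∈ s, p i * r i = Real.sqrt ((∑ i ∈ s, p i * r i)^2) by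
    rw [Real.sqrt_sq hnn]]
  exact Real.sqrt_le_sqrt cs

theorem sum_le_sum_of_atoms {Ω : Type*} [Fintype Ω] (p X Y : Ω → ℝ)
    (k : Ω → Finset Ω) (hk : ∀ ω, ω ∈ k ω) (hk2 : ∀ ω ω', ω' ∈ k ω → k ω' = k ω)
    (h : ∀ ω₀, ∑ ω' ∈ k ω₀, p ω' * X ω' ≤ ∑ ω' ∈ k ω₀, p ω' * Y ω') :
    ∑ ω, p ω * X ω ≤ ∑ ω, p ω * Y ω := by
  have hmap : ∀ ω ∈ Finset.univ, k ω ∈ Finset.univ.image k :=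
    fun ω _ => Finset.mem_image_of_mem k (Finset.mem_univ ω)
  rw [← Finset.sum_fiberwise_of_maps_to hmap (fun ω => p ω * X ω),
      ← Finset.sum_fiberwise_of_maps_to hmap (fun ω => p ω * Y ω)]
  refine Finset.sum_le_sum fun j hj => ?_
  obtain ⟨ω₀, -, rfl⟩ := Finset.mem_image.1 hj
  have hfil : (Finset.univ.filter fun ω' => k ω' = k ω₀) = k ω₀ := by
    ext ω'
    simp only [Finset.mem_filter, Finset.mem_univ, true_and]
    constructor
    · intro e; exact e ▸ hk ω'
    · exact hk2 ω₀ ω'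
  rw [hfil]
  exact h ω₀

theorem sqrt_contr {PG S q dv : ℝ} (hPG : 0 ≤ PG) (hd : 0 ≤ dv) (hq : q ≤ 2)
    (hS : S ≤ PG * ((1 - q) * dv^2)) :
    Real.sqrt (PG * S) ≤ PG * ((1 - q/2) * dv) := by
  have h1 : PG * S ≤ PG^2 * ((1 - q) * dv^2) := by nlinarith
  refine le_trans (Real.sqrt_le_sqrt h1) ?_
  rw [Real.sqrt_mul (sq_nonneg _), Real.sqrt_sq hPG,
    Real.sqrt_mul' _ (sq_nonneg dv), Real.sqrt_sq hd]
  exact mul_le_mul_of_nonneg_left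
    (mul_le_mul_of_nonneg_right (sqrt_one_sub_le hq) hd) hPG

theorem step_combine {P PB dv G δ ηt ν : ℝ} (hG : 0 < G)
    (hPB0 : 0 ≤ PB) (hP0 : 0 ≤ P) (hbad : PB ≤ δ * P) (hδ0 : 0 ≤ δ)
    (hη : 0 ≤ ηt) (hν : 0 < ν) (hd : 0 ≤ dv) (hd4 : dv * ν ≤ 4*G) :
    (P - PB) * ((1 - ηt * ν / 2) * dv) + PB * (dv + 2*G*ηt)
      ≤ P * ((1 - ηt * ν / 2) * dv + (8*G*δ/ν) * (ηt * ν / 2)) := by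
  have hid2 : (8*G*δ/ν) * (ηt * ν / 2) = δ*(4*G*ηt) := by field_simp; ring
  have e1 : ηt * ν / 2 * dv ≤ 2*G*ηt := by
    nlinarith [mul_le_mul_of_nonneg_left hd4 (by linarith : (0:ℝ) ≤ ηt/2)]
  have c1 : PB * (ηt*ν/2*dv) ≤ (δ*P)*(2*G*ηt) :=
    mul_le_mul hbad e1
      (mul_nonneg (div_nonneg (mul_nonneg hη hν.le) (by norm_num)) hd)
      (mul_nonneg hδ0 hP0)
  have c2 : PB*(2*G*ηt) ≤ (δ*P)*(2*G*ηt) :=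
    mul_le_mul_of_nonneg_right hbad
      (mul_nonneg (mul_nonneg (by norm_num) hG.le) hη)
  nlinarith [c1, c2, hid2]

theorem good_quad {PG P d2 s ηt ν SI : ℝ} (hPG0 : 0 ≤ PG) (hPGP : PG ≤ P)
    (hd2 : 0 ≤ d2) (hη : 0 ≤ ηt) (hν : 0 ≤ ν) (hs : s ≤ ηt*ν) (hSI : ν*P*d2 ≤ SI) :
    (1+s)*d2*PG - 2*ηt*SI ≤ PG*((1-ηt*ν)*d2) := by
  have h1 : 2*ηt*(ν*P*d2) ≤ 2*ηt*SI := by nlinarith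
  have h2 : ν*PG*d2 ≤ ν*P*d2 :=
    mul_le_mul_of_nonneg_right (mul_le_mul_of_nonneg_left hPGP hν) hd2
  have h3 : s*(d2*PG) ≤ (ηt*ν)*(d2*PG) :=
    mul_le_mul_of_nonneg_right hs (mul_nonneg hd2 hPG0)
  nlinarith [h1, h2, h3, mul_nonneg hη (mul_nonneg hν (mul_nonneg hPG0 hd2))]

/-- (Lemma 3.5 of the paper.)  Two coupled sequences that disagree with
conditional probability at most `δ` at every round except round `i`, and whose
conditionally expected losses are `μ`-strongly convex, produce projected-gradient-descent
iterates at expected distance at most `(4G/(μ̃ m))(1 + 4δm)` after `m` steps, where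
`μ̃ = μ - δβ` and `η_t = min{μ̃/β², 2/(μ̃ t)}`.  Randomness is modelled by a finite
probability space `(Ω, p)`; conditional probabilities and expectations given the
filtration `ℱ_{t-1} = (z_1, z'_1, …, z_{t-1}, z'_{t-1})` are expressed by summing over
the set of sample points with the same history. -/
theorem gd_stability_of_coupled_sequences
    {d : ℕ} {Ω Z : Type*} [Fintype Ω] [DecidableEq Z]
    (p : Ω → ℝ) (hp0 : ∀ ω, 0 ≤ p ω) (hp1 : ∑ ω, p ω = 1)
    (W : Set (EuclideanSpace ℝ (Fin d))) (hWconv : Convex ℝ W) (hWclosed : IsClosed W)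
    (proj : EuclideanSpace ℝ (Fin d) → EuclideanSpace ℝ (Fin d))
    (hproj : ∀ x, proj x ∈ W ∧ ∀ w ∈ W, ‖x - proj x‖ ≤ ‖x - w‖)
    (f : EuclideanSpace ℝ (Fin d) → Z → ℝ)
    (G β μ δ : ℝ) (hG : 0 < G) (hβ : 0 < β) (hμ : 0 < μ)
    (hδ0 : 0 ≤ δ) (hδ : δ ≤ μ / (2 * β))
    (hdiff : ∀ z, Differentiable ℝ (fun w => f w z))
    (hLip : ∀ z, ∀ w ∈ W, ‖gradient (fun u => f u z) w‖ ≤ G)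
    (hsmooth : ∀ z, ∀ x ∈ W, ∀ y ∈ W,
      ‖gradient (fun u => f u z) x - gradient (fun u => f u z) y‖ ≤ β * ‖x - y‖)
    (m i : ℕ) (hi1 : 1 ≤ i) (him : i ≤ m)
    (z z' : ℕ → Ω → Z)
    -- condition (i): `Pr(z_t ≠ z'_t ∣ ℱ_{t-1}) ≤ δ` for all `t ≠ i`
    (hcond1 : ∀ t, 1 ≤ t → t ≤ m → t ≠ i → ∀ ω : Ω,
      (∑ ω' ∈ Finset.univ.filter (fun ω' =>
            (∀ s ∈ Finset.Icc 1 (t - 1), z s ω' = z s ω ∧ z' s ω' = z' s ω) ∧ z t ω' ≠ z' t ω'),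
          p ω')
        ≤ δ * ∑ ω' ∈ Finset.univ.filter (fun ω' =>
            ∀ s ∈ Finset.Icc 1 (t - 1), z s ω' = z s ω ∧ z' s ω' = z' s ω), p ω')
    -- condition (ii): `E[f(w; z_t) ∣ ℱ_{t-1}]` is `μ`-strongly convex on `W`
    (hcond2 : ∀ t, 1 ≤ t → t ≤ m → ∀ ω : Ω,
      0 < (∑ ω' ∈ Finset.univ.filter (fun ω' =>
            ∀ s ∈ Finset.Icc 1 (t - 1), z s ω' = z s ω ∧ z' s ω' = z' s ω), p ω') →
      StrongConvexOnSet W μ (fun w =>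
        (∑ ω' ∈ Finset.univ.filter (fun ω' =>
            ∀ s ∈ Finset.Icc 1 (t - 1), z s ω' = z s ω ∧ z' s ω' = z' s ω), p ω' * f w (z t ω'))
        / (∑ ω' ∈ Finset.univ.filter (fun ω' =>
            ∀ s ∈ Finset.Icc 1 (t - 1), z s ω' = z s ω ∧ z' s ω' = z' s ω), p ω')))
    -- step sizes
    (η : ℕ → ℝ) (hη : ∀ t, η t = min ((μ - δ * β) / β ^ 2) (2 / ((μ - δ * β) * t)))
    -- the coupled projected gradient descent iterates, from the same initialization
    (w1 : EuclideanSpace ℝ (Fin d)) (hw1 : w1 ∈ W)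
    (w w' : ℕ → Ω → EuclideanSpace ℝ (Fin d))
    (hinit : ∀ ω, w 1 ω = w1 ∧ w' 1 ω = w1)
    (hstep : ∀ t, 1 ≤ t → t ≤ m → ∀ ω,
      w (t + 1) ω = proj (w t ω - η t • gradient (fun u => f u (z t ω)) (w t ω)) ∧
      w' (t + 1) ω = proj (w' t ω - η t • gradient (fun u => f u (z' t ω)) (w' t ω))) :
    ∑ ω, p ω * ‖w (m + 1) ω - w' (m + 1) ω‖
      ≤ 4 * G / ((μ - δ * β) * m) * (1 + 4 * δ * m) := by
  have hm1 : 1 ≤ m := le_trans hi1 him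
  -- basic positivity facts
  have hδβ : δ * β ≤ μ / 2 := by
    have h1 : δ * (2*β) ≤ μ := by
      rw [← le_div_iff₀ (by positivity)]
      exact hδ
    linarith
  set ν : ℝ := μ - δ * β with hν
  have hνpos : 0 < ν := by simp only [hν]; nlinarith
  have hνμ : ν ≤ μ := by simp only [hν]; nlinarith
  have hμ2ν : μ ≤ 2 * ν := by simp only [hν]; linarith
  set a : ℝ := ν^2/(2*β^2) with hadef
  have ha0 : 0 ≤ a := by positivity
  -- step size facts
  have hη0 : ∀ t : ℕ, 1 ≤ t → 0 ≤ η t := by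
    intro t ht
    rw [hη]
    have ht0 : (0:ℝ) < (t:ℝ) := by exact_mod_cast ht
    exact le_min (by positivity) (by positivity)
  have hηβ : ∀ t : ℕ, η t ≤ ν/β^2 := fun t => by rw [hη]; exact min_le_left _ _
  have hα : ∀ t : ℕ, 1 ≤ t → η t * ν = 2 * min a (1/(t:ℝ)) := by
    intro t ht
    have ht0 : (0:ℝ) < (t:ℝ) := by exact_mod_cast ht
    rw [hη, min_mul_of_nonneg _ _ (le_of_lt hνpos)]
    rw [show ν/β^2 * ν = 2 * (ν^2/(2*β^2)) by field_simp,
      show 2/(ν*(t:ℝ)) * ν = 2 * (1/(t:ℝ)) by field_simp]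
    rw [← mul_min_of_nonneg _ _ (by norm_num : (0:ℝ) ≤ 2)]
  have hαle : ∀ t : ℕ, 1 ≤ t → min a (1/(t:ℝ)) ≤ 1 := by
    intro t ht
    have ht0 : (0:ℝ) < (t:ℝ) := by exact_mod_cast ht
    have : 1/(t:ℝ) ≤ 1 := by
      rw [div_le_one ht0]; exact_mod_cast ht
    exact le_trans (min_le_right _ _) this
  have hα0 : ∀ t : ℕ, 0 ≤ min a (1/(t:ℝ)) := fun t => le_min ha0 (by positivity)
  -- iterates stay in W
  have hWmem : ∀ t : ℕ, 1 ≤ t → t ≤ m + 1 → ∀ ω, w t ω ∈ W ∧ w' t ω ∈ W := by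
    intro t ht1
    induction t, ht1 using Nat.le_induction with
    | base =>
      intro _ ω
      rw [(hinit ω).1, (hinit ω).2]
      exact ⟨hw1, hw1⟩
    | succ n hn ih =>
      intro hn2 ω
      have hnm : n ≤ m := by omega
      rw [(hstep n hn hnm ω).1, (hstep n hn hnm ω).2]
      exact ⟨(hproj _).1, (hproj _).1⟩
  -- iterates are determined by the history
  have hconst : ∀ t : ℕ, 1 ≤ t → t ≤ m + 1 → ∀ ω₀ ω' : Ω,
      (∀ s ∈ Finset.Icc 1 (t - 1), z s ω' = z s ω₀ ∧ z' s ω' = z' s ω₀) →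
      w t ω' = w t ω₀ ∧ w' t ω' = w' t ω₀ := by
    intro t ht1
    induction t, ht1 using Nat.le_induction with
    | base =>
      intro _ ω₀ ω' _
      rw [(hinit ω').1, (hinit ω').2, (hinit ω₀).1, (hinit ω₀).2]
      exact ⟨rfl, rfl⟩
    | succ n hn ih =>
      intro hn2 ω₀ ω' hhist
      have hnm : n ≤ m := by omega
      have hsub : ∀ s ∈ Finset.Icc 1 (n - 1), z s ω' = z s ω₀ ∧ z' s ω' = z' s ω₀ := by
        intro s hs
        apply hhist
        simp only [Finset.mem_Icc] at hs ⊢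
        omega
      have hw := ih (by omega) ω₀ ω' hsub
      have hzn : z n ω' = z n ω₀ ∧ z' n ω' = z' n ω₀ := by
        apply hhist
        simp only [Finset.mem_Icc]
        omega
      rw [(hstep n hn hnm ω').1, (hstep n hn hnm ω').2,
        (hstep n hn hnm ω₀).1, (hstep n hn hnm ω₀).2,
        hw.1, hw.2, hzn.1, hzn.2]
      exact ⟨rfl, rfl⟩
  -- Ω is nonempty
  rcases isEmpty_or_nonempty Ω with hE | hNE
  · rw [Finset.univ_eq_empty, Finset.sum_empty] at hp1
    norm_num at hp1
  -- diameter bound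
  have hdiam : ∀ x ∈ W, ∀ y ∈ W, ‖x - y‖ ≤ 2*G/μ := by
    intro x hx y hy
    obtain ⟨ω₀⟩ := hNE
    have hfil : (Finset.univ.filter (fun ω' =>
        ∀ s ∈ Finset.Icc 1 (1 - 1), z s ω' = z s ω₀ ∧ z' s ω' = z' s ω₀)) = Finset.univ := by
      refine Finset.eq_univ_iff_forall.2 fun ω'' => ?_
      simp only [Finset.mem_filter, Finset.mem_univ, true_and]
      intro s hs
      rw [Finset.mem_Icc] at hs
      omega
    have hPpos : 0 < ∑ ω' ∈ Finset.univ.filter (fun ω' =>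
        ∀ s ∈ Finset.Icc 1 (1 - 1), z s ω' = z s ω₀ ∧ z' s ω' = z' s ω₀), p ω' := by
      rw [hfil, hp1]; norm_num
    have hsc := hcond2 1 le_rfl hm1 ω₀ hPpos
    have hmono := atom_strong_mono f hdiff _ p (fun ω' => z 1 ω') hPpos hsc hx hy
    have hub : ∑ ω' ∈ Finset.univ.filter (fun ω' =>
          ∀ s ∈ Finset.Icc 1 (1 - 1), z s ω' = z s ω₀ ∧ z' s ω' = z' s ω₀),
        p ω' * (inner ℝ (gradient (fun u => f u (z 1 ω')) x
          - gradient (fun u => f u (z 1 ω')) y) (x - y) : ℝ)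
        ≤ ∑ ω' ∈ Finset.univ.filter (fun ω' =>
          ∀ s ∈ Finset.Icc 1 (1 - 1), z s ω' = z s ω₀ ∧ z' s ω' = z' s ω₀),
          p ω' * (2 * G * ‖x - y‖) := by
      refine Finset.sum_le_sum fun ω'' _ => mul_le_mul_of_nonneg_left ?_ (hp0 ω'')
      calc (inner ℝ (gradient (fun u => f u (z 1 ω'')) x
            - gradient (fun u => f u (z 1 ω'')) y) (x - y) : ℝ)
          ≤ ‖gradient (fun u => f u (z 1 ω'')) x - gradient (fun u => f u (z 1 ω'')) y‖
            * ‖x - y‖ := real_inner_le_norm _ _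
        _ ≤ (‖gradient (fun u => f u (z 1 ω'')) x‖ + ‖gradient (fun u => f u (z 1 ω'')) y‖)
            * ‖x - y‖ :=
            mul_le_mul_of_nonneg_right (norm_sub_le _ _) (norm_nonneg _)
        _ ≤ (G + G) * ‖x - y‖ :=
            mul_le_mul_of_nonneg_right
              (add_le_add (hLip _ x hx) (hLip _ y hy)) (norm_nonneg _)
        _ = 2 * G * ‖x - y‖ := by ring
    rw [← Finset.sum_mul, hfil, hp1, one_mul] at hub
    rw [hfil, hp1] at hmono
    rcases eq_or_lt_of_le (norm_nonneg (x - y)) with h0 | h0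
    · rw [← h0]; positivity
    · rw [le_div_iff₀ hμ]
      nlinarith
  have hdiam4 : ∀ x ∈ W, ∀ y ∈ W, ‖x - y‖ * ν ≤ 4*G := by
    intro x hx y hy
    have h1 := hdiam x hx y hy
    have h2 : ‖x - y‖ * μ ≤ 2*G := by
      rw [le_div_iff₀ hμ] at h1
      linarith
    nlinarith [norm_nonneg (x - y)]
  -- expected distances
  set D : ℕ → ℝ := fun t => ∑ ω, p ω * ‖w t ω - w' t ω‖ with hD
  have hD1 : D 1 = 0 := by
    simp only [hD]
    apply Finset.sum_eq_zero
    intro ω _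
    rw [(hinit ω).1, (hinit ω).2, sub_self, norm_zero, mul_zero]
  have hD0 : ∀ t, 0 ≤ D t := by
    intro t
    exact Finset.sum_nonneg fun ω _ => mul_nonneg (hp0 ω) (norm_nonneg _)
  -- pointwise bound on one step (crude, used at t = i)
  have hcrude : ∀ t : ℕ, 1 ≤ t → t ≤ m → ∀ ω,
      ‖w (t+1) ω - w' (t+1) ω‖ ≤ ‖w t ω - w' t ω‖ + 2*G*η t := by
    intro t ht1 htm ω
    have hx := (hWmem t ht1 (by omega) ω).1
    have hy := (hWmem t ht1 (by omega) ω).2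
    rw [(hstep t ht1 htm ω).1, (hstep t ht1 htm ω).2]
    refine le_trans (proj_nonexpansive' W hWconv proj hproj _ _) ?_
    have he : (w t ω - η t • gradient (fun u => f u (z t ω)) (w t ω))
        - (w' t ω - η t • gradient (fun u => f u (z' t ω)) (w' t ω))
        = (w t ω - w' t ω) + (η t • gradient (fun u => f u (z' t ω)) (w' t ω)
          - η t • gradient (fun u => f u (z t ω)) (w t ω)) := by module
    rw [he]
    refine le_trans (norm_add_le _ _) ?_
    have h1 : ‖η t • gradient (fun u => f u (z' t ω)) (w' t ω)
        - η t • gradient (fun u => f u (z t ω)) (w t ω)‖ ≤ 2*G*η t := by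
      refine le_trans (norm_sub_le _ _) ?_
      rw [norm_smul, norm_smul, Real.norm_eq_abs, abs_of_nonneg (hη0 t ht1)]
      have l1 := hLip (z' t ω) _ hy
      have l2 := hLip (z t ω) _ hx
      nlinarith [hη0 t ht1]
    linarith
  -- crude step at t = i
  have hstepi : D (i+1) ≤ D i + 2*G*η i := by
    have h1 : D (i+1) ≤ ∑ ω, p ω * (‖w i ω - w' i ω‖ + 2*G*η i) := by
      exact Finset.sum_le_sum fun ω _ =>
        mul_le_mul_of_nonneg_left (hcrude i hi1 him ω) (hp0 ω)
    calc D (i+1) ≤ ∑ ω, p ω * (‖w i ω - w' i ω‖ + 2*G*η i) := h1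
      _ = D i + 2*G*η i := by
          simp only [mul_add, Finset.sum_add_distrib, hD, ← Finset.sum_mul, hp1, one_mul]
  -- main contraction step for t ≠ i
  have hstept : ∀ t : ℕ, 1 ≤ t → t ≤ m → t ≠ i →
      D (t+1) ≤ (1 - min a (1/(t:ℝ))) * D t + (8*G*δ/ν) * min a (1/(t:ℝ)) := by
    intro t ht1 htm htne
    have hη1 : 0 ≤ η t := hη0 t ht1
    have hαν : η t * ν = 2 * min a (1/(t:ℝ)) := hα t ht1
    have hην2 : η t * ν ≤ 2 := by
      rw [hαν]
      linarith [hαle t ht1]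
    have hetab : η t * β^2 ≤ ν := by
      have := hηβ t
      rw [le_div_iff₀ (by positivity : (0:ℝ) < β^2)] at this
      exact this
    set k : Ω → Finset Ω := fun ω₀ => Finset.univ.filter (fun ω' =>
        ∀ s ∈ Finset.Icc 1 (t - 1), z s ω' = z s ω₀ ∧ z' s ω' = z' s ω₀) with hk
    have hkmem : ∀ ω₀, ω₀ ∈ k ω₀ := by
      intro ω₀
      simp [hk]
    have hkeq : ∀ ω₀ ω', ω' ∈ k ω₀ → k ω' = k ω₀ := by
      intro ω₀ ω' h
      simp only [hk, Finset.mem_filter, Finset.mem_univ, true_and] at h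
      simp only [hk]
      ext ω''
      simp only [Finset.mem_filter, Finset.mem_univ, true_and]
      constructor
      · intro hh s hs
        exact ⟨(hh s hs).1.trans (h s hs).1, (hh s hs).2.trans (h s hs).2⟩
      · intro hh s hs
        exact ⟨(hh s hs).1.trans (h s hs).1.symm, (hh s hs).2.trans (h s hs).2.symm⟩
    have main : ∀ ω₀, ∑ ω' ∈ k ω₀, p ω' * ‖w (t+1) ω' - w' (t+1) ω'‖
        ≤ ∑ ω' ∈ k ω₀, p ω' * ((1 - min a (1/(t:ℝ))) * ‖w t ω' - w' t ω'‖
            + (8*G*δ/ν) * min a (1/(t:ℝ))) := by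
      intro ω₀
      have hx : w t ω₀ ∈ W := (hWmem t ht1 (by omega) ω₀).1
      have hy : w' t ω₀ ∈ W := (hWmem t ht1 (by omega) ω₀).2
      have hP0 : 0 ≤ ∑ ω' ∈ k ω₀, p ω' := Finset.sum_nonneg fun ω' _ => hp0 ω'
      rcases eq_or_lt_of_le hP0 with hP | hP
      · -- the atom has zero mass
        have hz0 : ∀ ω' ∈ k ω₀, p ω' = 0 := fun ω' h =>
          (Finset.sum_eq_zero_iff_of_nonneg (fun ω'' _ => hp0 ω'')).1 hP.symm ω' h
        have e1 : ∑ ω' ∈ k ω₀, p ω' * ‖w (t+1) ω' - w' (t+1) ω'‖ = 0 :=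
          Finset.sum_eq_zero fun ω' h => by rw [hz0 ω' h, zero_mul]
        have e2 : ∑ ω' ∈ k ω₀, p ω' * ((1 - min a (1/(t:ℝ))) * ‖w t ω' - w' t ω'‖
            + (8*G*δ/ν) * min a (1/(t:ℝ))) = 0 :=
          Finset.sum_eq_zero fun ω' h => by rw [hz0 ω' h, zero_mul]
        rw [e1, e2]
      · -- the atom has positive mass
        have hcw : ∀ ω' ∈ k ω₀, w t ω' = w t ω₀ ∧ w' t ω' = w' t ω₀ := by
          intro ω' h
          apply hconst t ht1 (by omega) ω₀ ω'
          simpa only [hk, Finset.mem_filter, Finset.mem_univ, true_and] using h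
        -- strong convexity of the conditional expectation
        have hsc : StrongConvexOnSet W μ
            (fun wv => (∑ ω' ∈ k ω₀, p ω' * f wv (z t ω')) / (∑ ω' ∈ k ω₀, p ω')) :=
          hcond2 t ht1 htm ω₀ hP
        have hmono := atom_strong_mono f hdiff (k ω₀) p (fun ω' => z t ω') hP hsc hx hy
        -- bad set mass
        have hbad : ∑ ω' ∈ (k ω₀).filter (fun ω' => ¬ z t ω' = z' t ω'), p ω'
            ≤ δ * ∑ ω' ∈ k ω₀, p ω' := by
          have h1 := hcond1 t ht1 htm htne ω₀
          have hsetB : (k ω₀).filter (fun ω' => ¬ z t ω' = z' t ω')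
              = Finset.univ.filter (fun ω' =>
                (∀ s ∈ Finset.Icc 1 (t - 1), z s ω' = z s ω₀ ∧ z' s ω' = z' s ω₀)
                  ∧ z t ω' ≠ z' t ω') := by
            simp only [hk]
            ext ω''
            simp only [Finset.mem_filter, Finset.mem_univ, true_and, ne_eq]
          have hsetA : k ω₀ = Finset.univ.filter (fun ω' =>
              ∀ s ∈ Finset.Icc 1 (t - 1), z s ω' = z s ω₀ ∧ z' s ω' = z' s ω₀) := by
            simp only [hk]
          rw [hsetB, hsetA]
          exact h1
        -- update formulas on the atom
        have hupdate : ∀ ω' ∈ k ω₀,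
            w (t+1) ω' = proj (w t ω₀ - η t • gradient (fun u => f u (z t ω')) (w t ω₀)) ∧
            w' (t+1) ω' = proj (w' t ω₀ - η t • gradient (fun u => f u (z' t ω')) (w' t ω₀)) := by
          intro ω' h
          constructor
          · rw [(hstep t ht1 htm ω').1, (hcw ω' h).1]
          · rw [(hstep t ht1 htm ω').2, (hcw ω' h).2]
        have hpt : ∀ ω' ∈ k ω₀, ‖w (t+1) ω' - w' (t+1) ω'‖
            ≤ ‖(w t ω₀ - η t • gradient (fun u => f u (z t ω')) (w t ω₀))
              - (w' t ω₀ - η t • gradient (fun u => f u (z' t ω')) (w' t ω₀))‖ := by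
          intro ω' h
          rw [(hupdate ω' h).1, (hupdate ω' h).2]
          exact proj_nonexpansive' W hWconv proj hproj _ _
        -- split into good and bad parts
        rw [← Finset.sum_filter_add_sum_filter_not (k ω₀) (fun ω' => z t ω' = z' t ω')
          (fun ω' => p ω' * ‖w (t+1) ω' - w' (t+1) ω'‖)]
        -- bad part pointwise bound
        have hbadpt : ∀ ω' ∈ (k ω₀).filter (fun ω' => ¬ z t ω' = z' t ω'),
            ‖w (t+1) ω' - w' (t+1) ω'‖ ≤ ‖w t ω₀ - w' t ω₀‖ + 2*G*η t := by
          intro ω' h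
          refine le_trans (hpt ω' (Finset.filter_subset _ _ h)) ?_
          have he : (w t ω₀ - η t • gradient (fun u => f u (z t ω')) (w t ω₀))
              - (w' t ω₀ - η t • gradient (fun u => f u (z' t ω')) (w' t ω₀))
              = (w t ω₀ - w' t ω₀) + (η t • gradient (fun u => f u (z' t ω')) (w' t ω₀)
                - η t • gradient (fun u => f u (z t ω')) (w t ω₀)) := by module
          rw [he]
          refine le_trans (norm_add_le _ _) ?_
          have h1 : ‖η t • gradient (fun u => f u (z' t ω')) (w' t ω₀)
              - η t • gradient (fun u => f u (z t ω')) (w t ω₀)‖ ≤ 2*G*η t := by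
            refine le_trans (norm_sub_le _ _) ?_
            rw [norm_smul, norm_smul, Real.norm_eq_abs, abs_of_nonneg hη1]
            have l1 := hLip (z' t ω') _ hy
            have l2 := hLip (z t ω') _ hx
            nlinarith
          linarith
        have hbadsum : ∑ ω' ∈ (k ω₀).filter (fun ω' => ¬ z t ω' = z' t ω'),
            p ω' * ‖w (t+1) ω' - w' (t+1) ω'‖
            ≤ (∑ ω' ∈ (k ω₀).filter (fun ω' => ¬ z t ω' = z' t ω'), p ω')
              * (‖w t ω₀ - w' t ω₀‖ + 2*G*η t) := by
          rw [Finset.sum_mul]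
          exact Finset.sum_le_sum fun ω' h =>
            mul_le_mul_of_nonneg_left (hbadpt ω' h) (hp0 ω')
        -- good part
        have hgoodpt : ∀ ω' ∈ (k ω₀).filter (fun ω' => z t ω' = z' t ω'),
            ‖w (t+1) ω' - w' (t+1) ω'‖
            ≤ ‖(w t ω₀ - w' t ω₀) - η t • (gradient (fun u => f u (z t ω')) (w t ω₀)
                - gradient (fun u => f u (z t ω')) (w' t ω₀))‖ := by
          intro ω' h
          refine le_trans (hpt ω' (Finset.filter_subset _ _ h)) (le_of_eq ?_)
          have hzz : z' t ω' = z t ω' := ((Finset.mem_filter.1 h).2).symm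
          rw [hzz]
          congr 1
          module
        have hgoodsum1 : ∑ ω' ∈ (k ω₀).filter (fun ω' => z t ω' = z' t ω'),
            p ω' * ‖w (t+1) ω' - w' (t+1) ω'‖
            ≤ ∑ ω' ∈ (k ω₀).filter (fun ω' => z t ω' = z' t ω'),
              p ω' * ‖(w t ω₀ - w' t ω₀) - η t • (gradient (fun u => f u (z t ω')) (w t ω₀)
                - gradient (fun u => f u (z t ω')) (w' t ω₀))‖ :=
          Finset.sum_le_sum fun ω' h => mul_le_mul_of_nonneg_left (hgoodpt ω' h) (hp0 ω')
        have hCS := sum_weighted_le_sqrt ((k ω₀).filter (fun ω' => z t ω' = z' t ω')) p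
          (fun ω' => ‖(w t ω₀ - w' t ω₀) - η t • (gradient (fun u => f u (z t ω')) (w t ω₀)
            - gradient (fun u => f u (z t ω')) (w' t ω₀))‖)
          (fun ω' _ => hp0 ω') (fun ω' _ => norm_nonneg _)
        -- expansion of the squared norm
        have hRsq : ∀ ω' ∈ k ω₀,
            ‖(w t ω₀ - w' t ω₀) - η t • (gradient (fun u => f u (z t ω')) (w t ω₀)
              - gradient (fun u => f u (z t ω')) (w' t ω₀))‖ ^ 2
            ≤ (1 + (η t)^2*β^2) * ‖w t ω₀ - w' t ω₀‖^2
              - 2*(η t) * (inner ℝ (gradient (fun u => f u (z t ω')) (w t ω₀)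
                - gradient (fun u => f u (z t ω')) (w' t ω₀)) (w t ω₀ - w' t ω₀) : ℝ) := by
          intro ω' _
          have hexp : ‖(w t ω₀ - w' t ω₀) - η t • (gradient (fun u => f u (z t ω')) (w t ω₀)
              - gradient (fun u => f u (z t ω')) (w' t ω₀))‖ ^ 2
              = ‖w t ω₀ - w' t ω₀‖^2
                - 2*(η t) * (inner ℝ (gradient (fun u => f u (z t ω')) (w t ω₀)
                  - gradient (fun u => f u (z t ω')) (w' t ω₀)) (w t ω₀ - w' t ω₀) : ℝ)
                + (η t)^2 * ‖gradient (fun u => f u (z t ω')) (w t ω₀)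
                  - gradient (fun u => f u (z t ω')) (w' t ω₀)‖^2 := by
            rw [norm_sub_sq_real, inner_smul_right, norm_smul, Real.norm_eq_abs,
              abs_of_nonneg hη1, mul_pow, real_inner_comm]
            ring
          have hsm : ‖gradient (fun u => f u (z t ω')) (w t ω₀)
              - gradient (fun u => f u (z t ω')) (w' t ω₀)‖ ≤ β * ‖w t ω₀ - w' t ω₀‖ :=
            hsmooth (z t ω') _ hx _ hy
          have hsm2 : ‖gradient (fun u => f u (z t ω')) (w t ω₀)
              - gradient (fun u => f u (z t ω')) (w' t ω₀)‖^2 ≤ β^2 * ‖w t ω₀ - w' t ω₀‖^2 := by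
            nlinarith [norm_nonneg (gradient (fun u => f u (z t ω')) (w t ω₀)
              - gradient (fun u => f u (z t ω')) (w' t ω₀)),
              mul_nonneg hβ.le (norm_nonneg (w t ω₀ - w' t ω₀))]
          have hsm3 := mul_le_mul_of_nonneg_left hsm2 (sq_nonneg (η t))
          rw [hexp]
          nlinarith
        -- lower bound for the inner product sum over the good set
        have hsplitI := Finset.sum_filter_add_sum_filter_not (k ω₀)
          (fun ω' => z t ω' = z' t ω')
          (fun ω' => p ω' * (inner ℝ (gradient (fun u => f u (z t ω')) (w t ω₀)
            - gradient (fun u => f u (z t ω')) (w' t ω₀)) (w t ω₀ - w' t ω₀) : ℝ))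
        have hbadI : ∑ ω' ∈ (k ω₀).filter (fun ω' => ¬ z t ω' = z' t ω'),
            p ω' * (inner ℝ (gradient (fun u => f u (z t ω')) (w t ω₀)
              - gradient (fun u => f u (z t ω')) (w' t ω₀)) (w t ω₀ - w' t ω₀) : ℝ)
            ≤ (∑ ω' ∈ (k ω₀).filter (fun ω' => ¬ z t ω' = z' t ω'), p ω')
              * (β * ‖w t ω₀ - w' t ω₀‖^2) := by
          rw [Finset.sum_mul]
          refine Finset.sum_le_sum fun ω' h => mul_le_mul_of_nonneg_left ?_ (hp0 ω')
          have h1 := real_inner_le_norm (gradient (fun u => f u (z t ω')) (w t ω₀)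
            - gradient (fun u => f u (z t ω')) (w' t ω₀)) (w t ω₀ - w' t ω₀)
          have h2 : ‖gradient (fun u => f u (z t ω')) (w t ω₀)
              - gradient (fun u => f u (z t ω')) (w' t ω₀)‖ ≤ β * ‖w t ω₀ - w' t ω₀‖ :=
            hsmooth (z t ω') _ hx _ hy
          nlinarith [norm_nonneg (w t ω₀ - w' t ω₀)]
        have hbadI2 : (∑ ω' ∈ (k ω₀).filter (fun ω' => ¬ z t ω' = z' t ω'), p ω')
            * (β * ‖w t ω₀ - w' t ω₀‖^2)
            ≤ (δ * ∑ ω' ∈ k ω₀, p ω') * (β * ‖w t ω₀ - w' t ω₀‖^2) :=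
          mul_le_mul_of_nonneg_right hbad (by positivity)
        have hGdI : ν * (∑ ω' ∈ k ω₀, p ω') * ‖w t ω₀ - w' t ω₀‖^2
            ≤ ∑ ω' ∈ (k ω₀).filter (fun ω' => z t ω' = z' t ω'),
              p ω' * (inner ℝ (gradient (fun u => f u (z t ω')) (w t ω₀)
                - gradient (fun u => f u (z t ω')) (w' t ω₀)) (w t ω₀ - w' t ω₀) : ℝ) := by
          have hid : ν * (∑ ω' ∈ k ω₀, p ω') * ‖w t ω₀ - w' t ω₀‖^2
              = μ * (∑ ω' ∈ k ω₀, p ω') * ‖w t ω₀ - w' t ω₀‖^2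
                - (δ * ∑ ω' ∈ k ω₀, p ω') * (β * ‖w t ω₀ - w' t ω₀‖^2) := by
            rw [hν]; ring
          rw [hid]
          linarith [hmono, hbadI, hbadI2, hsplitI]
        -- quadratic bound on the good set
        have hPG0 : 0 ≤ ∑ ω' ∈ (k ω₀).filter (fun ω' => z t ω' = z' t ω'), p ω' :=
          Finset.sum_nonneg fun ω' _ => hp0 ω'
        have hPG : ∑ ω' ∈ (k ω₀).filter (fun ω' => z t ω' = z' t ω'), p ω'
            ≤ ∑ ω' ∈ k ω₀, p ω' :=
          Finset.sum_le_sum_of_subset_of_nonneg (Finset.filter_subset _ _)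
            fun ω' _ _ => hp0 ω'
        have hgood2 : ∑ ω' ∈ (k ω₀).filter (fun ω' => z t ω' = z' t ω'),
            p ω' * ‖(w t ω₀ - w' t ω₀) - η t • (gradient (fun u => f u (z t ω')) (w t ω₀)
              - gradient (fun u => f u (z t ω')) (w' t ω₀))‖ ^ 2
            ≤ (∑ ω' ∈ (k ω₀).filter (fun ω' => z t ω' = z' t ω'), p ω')
              * ((1 - η t * ν) * ‖w t ω₀ - w' t ω₀‖^2) := by
          have step1 : ∑ ω' ∈ (k ω₀).filter (fun ω' => z t ω' = z' t ω'),
              p ω' * ‖(w t ω₀ - w' t ω₀) - η t • (gradient (fun u => f u (z t ω')) (w t ω₀)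
                - gradient (fun u => f u (z t ω')) (w' t ω₀))‖ ^ 2
              ≤ ∑ ω' ∈ (k ω₀).filter (fun ω' => z t ω' = z' t ω'),
                ((1 + (η t)^2*β^2) * ‖w t ω₀ - w' t ω₀‖^2 * p ω'
                  - 2*(η t) * (p ω' * (inner ℝ (gradient (fun u => f u (z t ω')) (w t ω₀)
                    - gradient (fun u => f u (z t ω')) (w' t ω₀)) (w t ω₀ - w' t ω₀) : ℝ))) := by
            refine Finset.sum_le_sum fun ω' h => ?_
            have := mul_le_mul_of_nonneg_left
              (hRsq ω' (Finset.filter_subset _ _ h)) (hp0 ω')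
            nlinarith [this]
          rw [Finset.sum_sub_distrib, ← Finset.mul_sum, ← Finset.mul_sum] at step1
          have hη2β : (η t)^2 * β^2 ≤ η t * ν := by
            have h5 : η t * (η t * β^2) ≤ η t * ν := mul_le_mul_of_nonneg_left hetab hη1
            nlinarith [h5]
          refine le_trans step1 ?_
          exact good_quad hPG0 hPG (sq_nonneg _) hη1 hνpos.le hη2β hGdI
        -- square-root chain and final combination
        have hRHS : ∑ ω' ∈ k ω₀, p ω' * ((1 - min a (1/(t:ℝ))) * ‖w t ω' - w' t ω'‖
            + (8*G*δ/ν) * min a (1/(t:ℝ)))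
            = (∑ ω' ∈ k ω₀, p ω') * ((1 - min a (1/(t:ℝ))) * ‖w t ω₀ - w' t ω₀‖
              + (8*G*δ/ν) * min a (1/(t:ℝ))) := by
          rw [Finset.sum_mul]
          refine Finset.sum_congr rfl fun ω' h => ?_
          rw [(hcw ω' h).1, (hcw ω' h).2]
        rw [hRHS]
        have hgoodfinal : ∑ ω' ∈ (k ω₀).filter (fun ω' => z t ω' = z' t ω'),
            p ω' * ‖w (t+1) ω' - w' (t+1) ω'‖
            ≤ (∑ ω' ∈ (k ω₀).filter (fun ω' => z t ω' = z' t ω'), p ω')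
              * ((1 - η t * ν / 2) * ‖w t ω₀ - w' t ω₀‖) := by
          refine le_trans hgoodsum1 (le_trans hCS ?_)
          exact sqrt_contr hPG0 (norm_nonneg _) hην2 hgood2
        have hPsplit := Finset.sum_filter_add_sum_filter_not (k ω₀)
          (fun ω' => z t ω' = z' t ω') p
        have hd4 : ‖w t ω₀ - w' t ω₀‖ * ν ≤ 4*G := hdiam4 _ hx _ hy
        have halfa : min a (1/(t:ℝ)) = η t * ν / 2 := by linarith [hαν]
        rw [halfa]
        have hPB0 : 0 ≤ ∑ ω' ∈ (k ω₀).filter (fun ω' => ¬ z t ω' = z' t ω'), p ω' :=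
          Finset.sum_nonneg fun ω' _ => hp0 ω'
        have hPG2 : (∑ ω' ∈ (k ω₀).filter (fun ω' => z t ω' = z' t ω'), p ω')
            = (∑ ω' ∈ k ω₀, p ω')
              - (∑ ω' ∈ (k ω₀).filter (fun ω' => ¬ z t ω' = z' t ω'), p ω') := by
          linarith [hPsplit]
        rw [hPG2] at hgoodfinal
        refine le_trans (add_le_add hgoodfinal hbadsum) ?_
        exact step_combine hG hPB0 hP0 hbad hδ0 hη1 hνpos (norm_nonneg _) hd4
    have hmain2 := sum_le_sum_of_atoms p
      (fun ω' => ‖w (t+1) ω' - w' (t+1) ω'‖)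
      (fun ω' => (1 - min a (1/(t:ℝ))) * ‖w t ω' - w' t ω'‖
        + (8*G*δ/ν) * min a (1/(t:ℝ))) k hkmem hkeq main
    have hsum2 : ∑ ω, p ω * ((1 - min a (1/(t:ℝ))) * ‖w t ω - w' t ω‖
        + (8*G*δ/ν) * min a (1/(t:ℝ)))
        = (1 - min a (1/(t:ℝ))) * D t + (8*G*δ/ν) * min a (1/(t:ℝ)) := by
      have e : ∀ ω : Ω, p ω * ((1 - min a (1/(t:ℝ))) * ‖w t ω - w' t ω‖
          + (8*G*δ/ν) * min a (1/(t:ℝ)))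
          = (1 - min a (1/(t:ℝ))) * (p ω * ‖w t ω - w' t ω‖)
            + ((8*G*δ/ν) * min a (1/(t:ℝ))) * p ω := fun ω => by ring
      rw [Finset.sum_congr rfl (fun ω _ => e ω), Finset.sum_add_distrib,
        ← Finset.mul_sum, ← Finset.mul_sum, hp1, mul_one]
    calc D (t+1) ≤ ∑ ω, p ω * ((1 - min a (1/(t:ℝ))) * ‖w t ω - w' t ω‖
        + (8*G*δ/ν) * min a (1/(t:ℝ))) := hmain2
      _ = (1 - min a (1/(t:ℝ))) * D t + (8*G*δ/ν) * min a (1/(t:ℝ)) := hsum2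
  -- solving the recursion
  have hind : ∀ t : ℕ, 1 ≤ t → t ≤ m + 1 →
      D t ≤ if t ≤ i then (8*G*δ/ν) * min (a*((t:ℝ)-1)) 1
        else (4*G/ν) * (min a (1/((t:ℝ)-1)) * (1 + 2*δ*((t:ℝ)-1))) := by
    intro t ht1
    induction t, ht1 using Nat.le_induction with
    | base =>
      intro _
      rw [if_pos hi1]
      simp only [Nat.cast_one, sub_self, mul_zero]
      rw [hD1]
      simp
    | succ t ht ih =>
      intro ht2
      have htm : t ≤ m := by omega
      have iht := ih (by omega)
      have hτ1 : (1:ℝ) ≤ (t:ℝ) := by exact_mod_cast ht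
      have hcast : ((t:ℝ) + 1) - 1 = (t:ℝ) := by ring
      have hGδν : 0 ≤ 8*G*δ/ν := by positivity
      have h1α : 0 ≤ 1 - min a (1/(t:ℝ)) := by linarith [hαle t ht]
      rcases eq_or_ne t i with hti | hti
      · -- step at t = i
        subst hti
        rw [if_neg (by omega)]
        have hstep1 := hstepi
        have hη2 : 2*G*η t = (4*G/ν) * min a (1/(t:ℝ)) := by
          have := hα t ht
          field_simp
          nlinarith [hα t ht]
        rw [if_pos le_rfl] at iht
        push_cast
        rw [hcast]
        have hMmono : min (a*((t:ℝ)-1)) 1 ≤ min a (1/(t:ℝ)) * (t:ℝ) := by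
          have ht0 : (0:ℝ) < (t:ℝ) := by linarith
          have : min a (1/(t:ℝ)) * (t:ℝ) = min (a*(t:ℝ)) ((1/(t:ℝ))*(t:ℝ)) :=
            min_mul_of_nonneg _ _ (le_of_lt ht0)
          rw [this, show (1/(t:ℝ))*(t:ℝ) = 1 by field_simp]
          exact min_le_min (by nlinarith) le_rfl
        calc D (t+1) ≤ D t + 2*G*η t := hstep1
          _ ≤ (8*G*δ/ν) * min (a*((t:ℝ)-1)) 1 + (4*G/ν) * min a (1/(t:ℝ)) := by
              linarith [iht, hη2]
          _ ≤ (4*G/ν) * (min a (1/(t:ℝ)) * (1 + 2*δ*(t:ℝ))) := by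
              have hr : (4*G/ν) * (min a (1/(t:ℝ)) * (1 + 2*δ*(t:ℝ)))
                  = (4*G/ν) * min a (1/(t:ℝ)) + (8*G*δ/ν) * (min a (1/(t:ℝ)) * (t:ℝ)) := by
                ring
              rw [hr]
              have := mul_le_mul_of_nonneg_left hMmono hGδν
              linarith
      · have hs := hstept t ht htm hti
        rcases le_or_gt (t+1) i with hle | hlt
        · -- still before i
          rw [if_pos hle]
          rw [if_pos (by omega)] at iht
          have hkey := key_min1 ha0 hτ1
          have hDt := mul_le_mul_of_nonneg_left iht h1α
          push_cast
          rw [hcast]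
          calc D (t+1) ≤ (1 - min a (1/(t:ℝ))) * D t + (8*G*δ/ν) * min a (1/(t:ℝ)) := hs
            _ ≤ (1 - min a (1/(t:ℝ))) * ((8*G*δ/ν) * min (a*((t:ℝ)-1)) 1)
                + (8*G*δ/ν) * min a (1/(t:ℝ)) := by linarith
            _ = (8*G*δ/ν) * ((1 - min a (1/(t:ℝ))) * min (a*((t:ℝ)-1)) 1
                + min a (1/(t:ℝ))) := by ring
            _ ≤ (8*G*δ/ν) * min (a*(t:ℝ)) 1 := mul_le_mul_of_nonneg_left hkey hGδν
        · -- past i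
          rw [if_neg (by omega)]
          have hti2 : i < t := by omega
          have hτ2 : (2:ℝ) ≤ (t:ℝ) := by exact_mod_cast (by omega : 2 ≤ t)
          rw [if_neg (by omega)] at iht
          have hkey := key_min2 ha0 hτ2
          have hfac : 0 ≤ 1 + 2*δ*((t:ℝ)-1) := by nlinarith
          have h4Gν : 0 ≤ 4*G/ν := by positivity
          have hDt := mul_le_mul_of_nonneg_left iht h1α
          push_cast
          rw [hcast]
          have hstep2 : (1 - min a (1/(t:ℝ)))
              * ((4*G/ν) * (min a (1/((t:ℝ)-1)) * (1 + 2*δ*((t:ℝ)-1))))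
              ≤ (4*G/ν) * (min a (1/(t:ℝ)) * (1 + 2*δ*((t:ℝ)-1))) := by
            have := mul_le_mul_of_nonneg_right
              (mul_le_mul_of_nonneg_right hkey hfac) h4Gν
            calc (1 - min a (1/(t:ℝ)))
                * ((4*G/ν) * (min a (1/((t:ℝ)-1)) * (1 + 2*δ*((t:ℝ)-1))))
                = ((1 - min a (1/(t:ℝ))) * min a (1/((t:ℝ)-1)) * (1 + 2*δ*((t:ℝ)-1)))
                  * (4*G/ν) := by ring
              _ ≤ (min a (1/(t:ℝ)) * (1 + 2*δ*((t:ℝ)-1))) * (4*G/ν) := this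
              _ = (4*G/ν) * (min a (1/(t:ℝ)) * (1 + 2*δ*((t:ℝ)-1))) := by ring
          calc D (t+1) ≤ (1 - min a (1/(t:ℝ))) * D t + (8*G*δ/ν) * min a (1/(t:ℝ)) := hs
            _ ≤ (4*G/ν) * (min a (1/(t:ℝ)) * (1 + 2*δ*((t:ℝ)-1)))
                + (8*G*δ/ν) * min a (1/(t:ℝ)) := by linarith
            _ = (4*G/ν) * (min a (1/(t:ℝ)) * (1 + 2*δ*(t:ℝ))) := by ring
  -- conclude
  have hfinal := hind (m+1) (by omega) le_rfl
  rw [if_neg (by omega)] at hfinal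
  have hcast : ((m+1:ℕ):ℝ) - 1 = (m:ℝ) := by push_cast; ring
  rw [hcast] at hfinal
  have hm0 : (0:ℝ) < (m:ℝ) := by exact_mod_cast hm1
  have hlast : (4*G/ν) * (min a (1/(m:ℝ)) * (1 + 2*δ*(m:ℝ)))
      ≤ 4 * G / (ν * m) * (1 + 4*δ*m) := by
    have h1 : min a (1/(m:ℝ)) ≤ 1/(m:ℝ) := min_le_right _ _
    have h2 : (0:ℝ) ≤ 1 + 2*δ*(m:ℝ) := by nlinarith
    have h3 : min a (1/(m:ℝ)) * (1 + 2*δ*(m:ℝ)) ≤ (1/(m:ℝ)) * (1 + 4*δ*(m:ℝ)) := by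
      have e1 : min a (1/(m:ℝ)) * (1 + 2*δ*(m:ℝ)) ≤ (1/(m:ℝ)) * (1 + 2*δ*(m:ℝ)) :=
        mul_le_mul_of_nonneg_right h1 h2
      have e2 : (1/(m:ℝ)) * (1 + 2*δ*(m:ℝ)) ≤ (1/(m:ℝ)) * (1 + 4*δ*(m:ℝ)) := by
        apply mul_le_mul_of_nonneg_left _ (by positivity)
        nlinarith
      linarith
    calc (4*G/ν) * (min a (1/(m:ℝ)) * (1 + 2*δ*(m:ℝ)))
        ≤ (4*G/ν) * ((1/(m:ℝ)) * (1 + 4*δ*(m:ℝ))) :=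
          mul_le_mul_of_nonneg_left h3 (by positivity)
      _ = 4 * G / (ν * m) * (1 + 4*δ*m) := by field_simp
  calc ∑ ω, p ω * ‖w (m + 1) ω - w' (m + 1) ω‖ = D (m+1) := rfl
    _ ≤ (4*G/ν) * (min a (1/(m:ℝ)) * (1 + 2*δ*(m:ℝ))) := hfinal
    _ ≤ 4 * G / (ν * m) * (1 + 4*δ*m) := hlast
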